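/- Let r > m > 0 be real numbers. For all (u,v) ∈ ℝ², writing D(v) = r² − (r²−m²) sin²v (which is positive), the first fundamental form of the bipolar Lawson immersion Ĩ_{r,m} is given by ⟨∂_u Ĩ(u,v), ∂_u Ĩ(u,v)⟩ = (D(v)² + r²m²)/D(v), ⟨∂_u Ĩ(u,v), ∂_v Ĩ(u,v)⟩ = 0, and ⟨∂_v Ĩ(u,v), ∂_v Ĩ(u,v)⟩ = (D(v)² + r²m²)/D(v)². -/

import Mathlib

open Real

open scoped RealInnerProductSpace

/-- The bipolar Lawson immersion `Ĩ_{r,m} : ℝ² → ℝ⁶`, whose image is the bipolar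
Lawson surface `τ̃_{r,m}`. -/
noncomputable def bipolarLawson (r m : ℝ) : ℝ × ℝ → EuclideanSpace ℝ (Fin 6) := fun p =>
  (Real.sqrt (r^2 * Real.cos p.2 ^ 2 + m^2 * Real.sin p.2 ^ 2))⁻¹ •
    (WithLp.toLp 2 ![-(m * Real.sin p.2 * Real.cos p.2),
       r * Real.sin p.2 * Real.cos p.2,
       -(r * Real.cos p.2 ^ 2 * Real.sin (m * p.1) * Real.cos (r * p.1))
         - m * Real.sin p.2 ^ 2 * Real.sin (r * p.1) * Real.cos (m * p.1),
       r * Real.cos p.2 ^ 2 * Real.cos (m * p.1) * Real.sin (r * p.1)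
         + m * Real.sin p.2 ^ 2 * Real.cos (r * p.1) * Real.sin (m * p.1),
       -(r * Real.cos p.2 ^ 2 * Real.sin (m * p.1) * Real.sin (r * p.1))
         + m * Real.sin p.2 ^ 2 * Real.cos (r * p.1) * Real.cos (m * p.1),
       r * Real.cos p.2 ^ 2 * Real.cos (m * p.1) * Real.cos (r * p.1)
         - m * Real.sin p.2 ^ 2 * Real.sin (r * p.1) * Real.sin (m * p.1)] :
      EuclideanSpace ℝ (Fin 6))

private lemma euclid_hasDerivAt {f : ℝ → EuclideanSpace ℝ (Fin 6)} {f' : EuclideanSpace ℝ (Fin 6)}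
    {x : ℝ} (h : HasDerivAt (fun t i => f t i) (fun i => f' i) x) : HasDerivAt f f' x :=
  ((PiLp.continuousLinearEquiv 2 ℝ (fun _ : Fin 6 => ℝ)).symm.toContinuousLinearMap.hasFDerivAt).comp_hasDerivAt x h

private lemma euclid_diffAt {f : ℝ × ℝ → EuclideanSpace ℝ (Fin 6)} {x : ℝ × ℝ}
    (h : DifferentiableAt ℝ (fun p i => f p i) x) : DifferentiableAt ℝ f x :=
  ((PiLp.continuousLinearEquiv 2 ℝ (fun _ : Fin 6 => ℝ)).symm.toContinuousLinearMap.differentiableAt).comp x h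

private lemma hasDerivAt_sin_mul (a t : ℝ) :
    HasDerivAt (fun x : ℝ => Real.sin (a * x)) (a * Real.cos (a * t)) t := by
  simpa [mul_comm, Function.comp_def] using (Real.hasDerivAt_sin (a * t)).comp t ((hasDerivAt_id t).const_mul a)

private lemma hasDerivAt_cos_mul (a t : ℝ) :
    HasDerivAt (fun x : ℝ => Real.cos (a * x)) (-(a * Real.sin (a * t))) t := by
  simpa [mul_comm, Function.comp_def] using (Real.hasDerivAt_cos (a * t)).comp t ((hasDerivAt_id t).const_mul a)

private lemma cons6_0 {α : Type*} (a b c d e f : α) : (![a,b,c,d,e,f] : Fin 6 → α) 0 = a := rfl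
private lemma cons6_1 {α : Type*} (a b c d e f : α) : (![a,b,c,d,e,f] : Fin 6 → α) 1 = b := rfl
private lemma cons6_2 {α : Type*} (a b c d e f : α) : (![a,b,c,d,e,f] : Fin 6 → α) 2 = c := rfl
private lemma cons6_3 {α : Type*} (a b c d e f : α) : (![a,b,c,d,e,f] : Fin 6 → α) 3 = d := rfl
private lemma cons6_4 {α : Type*} (a b c d e f : α) : (![a,b,c,d,e,f] : Fin 6 → α) 4 = e := rfl
private lemma cons6_5 {α : Type*} (a b c d e f : α) : (![a,b,c,d,e,f] : Fin 6 → α) 5 = f := rfl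

/-- The position vector of the (unnormalized) bipolar Lawson surface. -/
private noncomputable def vecW (r m u v : ℝ) : EuclideanSpace ℝ (Fin 6) :=
  WithLp.toLp 2 ![-(m * Real.sin v * Real.cos v),
      r * Real.sin v * Real.cos v,
      -(r * Real.cos v ^ 2 * Real.sin (m * u) * Real.cos (r * u))
        - m * Real.sin v ^ 2 * Real.sin (r * u) * Real.cos (m * u),
      r * Real.cos v ^ 2 * Real.cos (m * u) * Real.sin (r * u)
        + m * Real.sin v ^ 2 * Real.cos (r * u) * Real.sin (m * u),
      -(r * Real.cos v ^ 2 * Real.sin (m * u) * Real.sin (r * u))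
        + m * Real.sin v ^ 2 * Real.cos (r * u) * Real.cos (m * u),
      r * Real.cos v ^ 2 * Real.cos (m * u) * Real.cos (r * u)
        - m * Real.sin v ^ 2 * Real.sin (r * u) * Real.sin (m * u)]

/-- The `u`-partial of `vecW`. -/
private noncomputable def vecA (r m u v : ℝ) : EuclideanSpace ℝ (Fin 6) :=
  WithLp.toLp 2 ![0, 0,
      (r^2 * Real.cos v ^ 2 + m^2 * Real.sin v ^ 2) * Real.sin (m*u) * Real.sin (r*u)
        - r*m*Real.cos (m*u)*Real.cos (r*u),
      (r^2 * Real.cos v ^ 2 + m^2 * Real.sin v ^ 2) * Real.cos (m*u) * Real.cos (r*u)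
        - r*m*Real.sin (m*u)*Real.sin (r*u),
      -((r^2 * Real.cos v ^ 2 + m^2 * Real.sin v ^ 2) * Real.sin (m*u) * Real.cos (r*u))
        - r*m*Real.cos (m*u)*Real.sin (r*u),
      -((r^2 * Real.cos v ^ 2 + m^2 * Real.sin v ^ 2) * Real.cos (m*u) * Real.sin (r*u))
        - r*m*Real.sin (m*u)*Real.cos (r*u)]

/-- The `v`-partial of `vecW`. -/
private noncomputable def vecWv (r m u v : ℝ) : EuclideanSpace ℝ (Fin 6) :=
  WithLp.toLp 2 ![-(m * (Real.cos v ^ 2 - Real.sin v ^ 2)),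
      r * (Real.cos v ^ 2 - Real.sin v ^ 2),
      2*Real.sin v*Real.cos v*(r*Real.sin (m*u)*Real.cos (r*u) - m*Real.sin (r*u)*Real.cos (m*u)),
      2*Real.sin v*Real.cos v*(m*Real.cos (r*u)*Real.sin (m*u) - r*Real.cos (m*u)*Real.sin (r*u)),
      2*Real.sin v*Real.cos v*(r*Real.sin (m*u)*Real.sin (r*u) + m*Real.cos (r*u)*Real.cos (m*u)),
      -(2*Real.sin v*Real.cos v*(r*Real.cos (m*u)*Real.cos (r*u) + m*Real.sin (r*u)*Real.sin (m*u)))]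

private lemma innAA (r m u v : ℝ) :
    ⟪vecA r m u v, vecA r m u v⟫ = (r^2 - (r^2 - m^2) * Real.sin v ^ 2)^2 + r^2 * m^2 := by
  simp only [vecW, vecA, vecWv, PiLp.inner_apply, RCLike.inner_apply, conj_trivial, PiLp.toLp_apply,
      Fin.sum_univ_six, cons6_0, cons6_1, cons6_2, cons6_3, cons6_4, cons6_5]
  linear_combination ((2)*r^2*m^2*(Real.sin v)^2*(Real.cos (m*u))^2*(Real.cos (r*u))^2 + (2)*r^2*m^2*(Real.sin v)^2*(Real.cos (m*u))^2*(Real.sin (r*u))^2 + (2)*r^2*m^2*(Real.sin v)^2*(Real.sin (m*u))^2*(Real.cos (r*u))^2 + (2)*r^2*m^2*(Real.sin v)^2*(Real.sin (m*u))^2*(Real.sin (r*u))^2 + r^4*(Real.cos (m*u))^2*(Real.cos (r*u))^2 + r^4*(Real.cos (m*u))^2*(Real.sin (r*u))^2 + r^4*(Real.sin (m*u))^2*(Real.cos (r*u))^2 + r^4*(Real.sin (m*u))^2*(Real.sin (r*u))^2 + r^4*(Real.cos v)^2*(Real.cos (m*u))^2*(Real.cos (r*u))^2 + r^4*(Real.cos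 v)^2*(Real.cos (m*u))^2*(Real.sin (r*u))^2 + r^4*(Real.cos v)^2*(Real.sin (m*u))^2*(Real.cos (r*u))^2 + r^4*(Real.cos v)^2*(Real.sin (m*u))^2*(Real.sin (r*u))^2 + (-1)*r^4*(Real.sin v)^2*(Real.cos (m*u))^2*(Real.cos (r*u))^2 + (-1)*r^4*(Real.sin v)^2*(Real.cos (m*u))^2*(Real.sin (r*u))^2 + (-1)*r^4*(Real.sin v)^2*(Real.sin (m*u))^2*(Real.cos (r*u))^2 + (-1)*r^4*(Real.sin v)^2*(Real.sin (m*u))^2*(Real.sin (r*u))^2) * (Real.sin_sq_add_cos_sq v) + (m^4*(Real.sin v)^4*(Real.cos (r*u))^2 + m^4*(Real.sin v)^4*(Real.sin (r*u))^2 + r^2*m^2*(Real.cos (r*u))^2 + r^2*m^2*(Real.sin (r*u))^2 + (2)*r^2*m^2*(Real.sin v)^2*(Real.cos (r*u))^2 + (2)*r^2*m^2*(Real.sin v)^2*(Real.sin (r*u))^2 + (-2)*r^2*m^2*(Real.sin v)^4*(Real.cos (r*u))^2 + (-2)*r^2*m^2*(Real.sin v)^4*(Real.sin (r*u))^2 +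 r^4*(Real.cos (r*u))^2 + r^4*(Real.sin (r*u))^2 + (-2)*r^4*(Real.sin v)^2*(Real.cos (r*u))^2 + (-2)*r^4*(Real.sin v)^2*(Real.sin (r*u))^2 + r^4*(Real.sin v)^4*(Real.cos (r*u))^2 + r^4*(Real.sin v)^4*(Real.sin (r*u))^2) * (Real.sin_sq_add_cos_sq (m*u)) + (m^4*(Real.sin v)^4 + r^2*m^2 + (2)*r^2*m^2*(Real.sin v)^2 + (-2)*r^2*m^2*(Real.sin v)^4 + r^4 + (-2)*r^4*(Real.sin v)^2 + r^4*(Real.sin v)^4) * (Real.sin_sq_add_cos_sq (r*u))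

private lemma innAW (r m u v : ℝ) : ⟪vecA r m u v, vecW r m u v⟫ = 0 := by
  simp only [vecW, vecA, vecWv, PiLp.inner_apply, RCLike.inner_apply, conj_trivial, PiLp.toLp_apply,
      Fin.sum_univ_six, cons6_0, cons6_1, cons6_2, cons6_3, cons6_4, cons6_5]
  ring

private lemma innAWv (r m u v : ℝ) : ⟪vecA r m u v, vecWv r m u v⟫ = 0 := by
  simp only [vecW, vecA, vecWv, PiLp.inner_apply, RCLike.inner_apply, conj_trivial, PiLp.toLp_apply,
      Fin.sum_univ_six, cons6_0, cons6_1, cons6_2, cons6_3, cons6_4, cons6_5]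
  ring

private lemma innWvWv (r m u v : ℝ) : ⟪vecWv r m u v, vecWv r m u v⟫ = m^2 + r^2 := by
  simp only [vecW, vecA, vecWv, PiLp.inner_apply, RCLike.inner_apply, conj_trivial, PiLp.toLp_apply,
      Fin.sum_univ_six, cons6_0, cons6_1, cons6_2, cons6_3, cons6_4, cons6_5]
  linear_combination (m^2 + m^2*(Real.cos v)^2 + (-3)*m^2*(Real.sin v)^2 + (4)*m^2*(Real.sin v)^2*(Real.cos (m*u))^2*(Real.cos (r*u))^2 + (4)*m^2*(Real.sin v)^2*(Real.cos (m*u))^2*(Real.sin (r*u))^2 + (4)*m^2*(Real.sin v)^2*(Real.sin (m*u))^2*(Real.cos (r*u))^2 + (4)*m^2*(Real.sin v)^2*(Real.sin (m*u))^2*(Real.sin (r*u))^2 + r^2 + r^2*(Real.cos v)^2 + (-3)*r^2*(Real.sin v)^2 + (4)*r^2*(Real.sin v)^2*(Real.cos (m*u))^2*(Real.cos (r*u))^2 + (4)*r^2*(Real.sin v)^2*(Real.cos (m*u))^2*(Real.sin (r*u))^2 + (4)*r^2*(Real.sin v)^2*(Real.sin (m*u))^2*(Real.cos (r*u))^2 +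 (4)*r^2*(Real.sin v)^2*(Real.sin (m*u))^2*(Real.sin (r*u))^2) * (Real.sin_sq_add_cos_sq v) + ((4)*m^2*(Real.sin v)^2*(Real.cos (r*u))^2 + (4)*m^2*(Real.sin v)^2*(Real.sin (r*u))^2 + (-4)*m^2*(Real.sin v)^4*(Real.cos (r*u))^2 + (-4)*m^2*(Real.sin v)^4*(Real.sin (r*u))^2 + (4)*r^2*(Real.sin v)^2*(Real.cos (r*u))^2 + (4)*r^2*(Real.sin v)^2*(Real.sin (r*u))^2 + (-4)*r^2*(Real.sin v)^4*(Real.cos (r*u))^2 + (-4)*r^2*(Real.sin v)^4*(Real.sin (r*u))^2) * (Real.sin_sq_add_cos_sq (m*u)) + ((4)*m^2*(Real.sin v)^2 + (-4)*m^2*(Real.sin v)^4 + (4)*r^2*(Real.sin v)^2 + (-4)*r^2*(Real.sin v)^4) * (Real.sin_sq_add_cos_sq (r*u))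

private lemma innWvW (r m u v : ℝ) :
    ⟪vecWv r m u v, vecW r m u v⟫ = -((r^2 - m^2) * Real.sin v * Real.cos v) := by
  simp only [vecW, vecA, vecWv, PiLp.inner_apply, RCLike.inner_apply, conj_trivial, PiLp.toLp_apply,
      Fin.sum_univ_six, cons6_0, cons6_1, cons6_2, cons6_3, cons6_4, cons6_5]
  linear_combination (m^2*Real.sin v*Real.cos v + r^2*Real.sin v*Real.cos v + (-2)*r^2*Real.sin v*Real.cos v*(Real.cos (m*u))^2*(Real.cos (r*u))^2 + (-2)*r^2*Real.sin v*Real.cos v*(Real.cos (m*u))^2*(Real.sin (r*u))^2 + (-2)*r^2*Real.sin v*Real.cos v*(Real.sin (m*u))^2*(Real.cos (r*u))^2 + (-2)*r^2*Real.sin v*Real.cos v*(Real.sin (m*u))^2*(Real.sin (r*u))^2) * (Real.sin_sq_add_cos_sq v) + ((2)*m^2*(Real.sin v)^3*Real.cos v*(Real.cos (r*u))^2 + (2)*m^2*(Real.sin v)^3*Real.cos v*(Real.sin (r*u))^2 + (-2)*r^2*Real.sin v*Real.cos v*(Real.cos (r*u))^2 + (-2)*r^2*Real.sin v*Real.cos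 v*(Real.sin (r*u))^2 + (2)*r^2*(Real.sin v)^3*Real.cos v*(Real.cos (r*u))^2 + (2)*r^2*(Real.sin v)^3*Real.cos v*(Real.sin (r*u))^2) * (Real.sin_sq_add_cos_sq (m*u)) + ((2)*m^2*(Real.sin v)^3*Real.cos v + (-2)*r^2*Real.sin v*Real.cos v + (2)*r^2*(Real.sin v)^3*Real.cos v) * (Real.sin_sq_add_cos_sq (r*u))

private lemma innWW (r m u v : ℝ) :
    ⟪vecW r m u v, vecW r m u v⟫ = r^2 - (r^2 - m^2) * Real.sin v ^ 2 := by
  simp only [vecW, vecA, vecWv, PiLp.inner_apply, RCLike.inner_apply, conj_trivial, PiLp.toLp_apply,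
      Fin.sum_univ_six, cons6_0, cons6_1, cons6_2, cons6_3, cons6_4, cons6_5]
  linear_combination (m^2*(Real.sin v)^2 + r^2*(Real.cos (m*u))^2*(Real.cos (r*u))^2 + r^2*(Real.cos (m*u))^2*(Real.sin (r*u))^2 + r^2*(Real.sin (m*u))^2*(Real.cos (r*u))^2 + r^2*(Real.sin (m*u))^2*(Real.sin (r*u))^2 + r^2*(Real.cos v)^2*(Real.cos (m*u))^2*(Real.cos (r*u))^2 + r^2*(Real.cos v)^2*(Real.cos (m*u))^2*(Real.sin (r*u))^2 + r^2*(Real.cos v)^2*(Real.sin (m*u))^2*(Real.cos (r*u))^2 + r^2*(Real.cos v)^2*(Real.sin (m*u))^2*(Real.sin (r*u))^2 + r^2*(Real.sin v)^2 + (-1)*r^2*(Real.sin v)^2*(Real.cos (m*u))^2*(Real.cos (r*u))^2 + (-1)*r^2*(Real.sin v)^2*(Real.cos (m*u))^2*(Real.sin (r*u))^2 + (-1)*r^2*(Real.sin v)^2*(Real.sin (m*u))^2*(Real.cos (r*u))^2 + (-1)*r^2*(Real.sin v)^2*(Real.sin (m*u))^2*(Real.sin (r*u))^2) * (Real.sin_sq_add_cos_sq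 v) + (m^2*(Real.sin v)^4*(Real.cos (r*u))^2 + m^2*(Real.sin v)^4*(Real.sin (r*u))^2 + r^2*(Real.cos (r*u))^2 + r^2*(Real.sin (r*u))^2 + (-2)*r^2*(Real.sin v)^2*(Real.cos (r*u))^2 + (-2)*r^2*(Real.sin v)^2*(Real.sin (r*u))^2 + r^2*(Real.sin v)^4*(Real.cos (r*u))^2 + r^2*(Real.sin v)^4*(Real.sin (r*u))^2) * (Real.sin_sq_add_cos_sq (m*u)) + (m^2*(Real.sin v)^4 + r^2 + (-2)*r^2*(Real.sin v)^2 + r^2*(Real.sin v)^4) * (Real.sin_sq_add_cos_sq (r*u))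

private lemma inner_smul_add_smul {F : Type*} [NormedAddCommGroup F] [InnerProductSpace ℝ F]
    (a b : ℝ) (x y : F) :
    ⟪a • x + b • y, a • x + b • y⟫
      = a * a * ⟪x, x⟫ + 2 * (a * b * ⟪x, y⟫) + b * b * ⟪y, y⟫ := by
  rw [real_inner_add_add_self, real_inner_smul_left, real_inner_smul_right,
    real_inner_smul_left, real_inner_smul_right, real_inner_smul_left, real_inner_smul_right]
  ring
private lemma scalar_qq (D K T Y s : ℝ) (hD : D ≠ 0) (hs : s * s = D) (hs0 : s ≠ 0)
    (hkey : T * D - K ^ 2 = Y) :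
    s⁻¹ * s⁻¹ * T + 2 * (s⁻¹ * (K / (s * D)) * -K) + K / (s * D) * (K / (s * D)) * D = Y / D ^ 2 := by
  field_simp
  linear_combination D * hkey - Y * hs

private lemma keyU (r m u v : ℝ) :
    HasDerivAt (fun t => bipolarLawson r m (t, v))
      ((Real.sqrt (r^2 * Real.cos v ^ 2 + m^2 * Real.sin v ^ 2))⁻¹ • vecA r m u v) u := by
  have hsm := hasDerivAt_sin_mul m u
  have hcm := hasDerivAt_cos_mul m u
  have hsr := hasDerivAt_sin_mul r u
  have hcr := hasDerivAt_cos_mul r u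
  have hpi : HasDerivAt
      (fun t => (![-(m * Real.sin v * Real.cos v),
        r * Real.sin v * Real.cos v,
        -(r * Real.cos v ^ 2 * Real.sin (m * t) * Real.cos (r * t))
          - m * Real.sin v ^ 2 * Real.sin (r * t) * Real.cos (m * t),
        r * Real.cos v ^ 2 * Real.cos (m * t) * Real.sin (r * t)
          + m * Real.sin v ^ 2 * Real.cos (r * t) * Real.sin (m * t),
        -(r * Real.cos v ^ 2 * Real.sin (m * t) * Real.sin (r * t))
          + m * Real.sin v ^ 2 * Real.cos (r * t) * Real.cos (m * t),
        r * Real.cos v ^ 2 * Real.cos (m * t) * Real.cos (r * t)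
          - m * Real.sin v ^ 2 * Real.sin (r * t) * Real.sin (m * t)] : Fin 6 → ℝ))
      (![0, 0,
        (r^2 * Real.cos v ^ 2 + m^2 * Real.sin v ^ 2) * Real.sin (m*u) * Real.sin (r*u)
          - r*m*Real.cos (m*u)*Real.cos (r*u),
        (r^2 * Real.cos v ^ 2 + m^2 * Real.sin v ^ 2) * Real.cos (m*u) * Real.cos (r*u)
          - r*m*Real.sin (m*u)*Real.sin (r*u),
        -((r^2 * Real.cos v ^ 2 + m^2 * Real.sin v ^ 2) * Real.sin (m*u) * Real.cos (r*u))
          - r*m*Real.cos (m*u)*Real.sin (r*u),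
        -((r^2 * Real.cos v ^ 2 + m^2 * Real.sin v ^ 2) * Real.cos (m*u) * Real.sin (r*u))
          - r*m*Real.sin (m*u)*Real.cos (r*u)] : Fin 6 → ℝ) u := by
    refine hasDerivAt_pi.2 fun i => ?_
    fin_cases i <;>
      simp only [Matrix.cons_val_zero, Matrix.cons_val_one, Matrix.head_cons,
        Matrix.cons_val_succ, Matrix.tail_cons, Fin.isValue]
    · exact hasDerivAt_const u _
    · exact hasDerivAt_const u _
    · have h := (((hsm.const_mul (r * Real.cos v ^ 2)).mul hcr).neg).sub
        ((hsr.const_mul (m * Real.sin v ^ 2)).mul hcm)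
      show HasDerivAt _ ((r^2 * Real.cos v ^ 2 + m^2 * Real.sin v ^ 2) * Real.sin (m*u) * Real.sin (r*u)
        - r*m*Real.cos (m*u)*Real.cos (r*u)) u
      refine h.congr_deriv (Eq.symm ?_)
      linear_combination (r*m*Real.cos (m*u)*Real.cos (r*u)) * (Real.sin_sq_add_cos_sq v)
    · have h := ((hcm.const_mul (r * Real.cos v ^ 2)).mul hsr).add
        ((hcr.const_mul (m * Real.sin v ^ 2)).mul hsm)
      show HasDerivAt _ ((r^2 * Real.cos v ^ 2 + m^2 * Real.sin v ^ 2) * Real.cos (m*u) * Real.cos (r*u)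
        - r*m*Real.sin (m*u)*Real.sin (r*u)) u
      refine h.congr_deriv (Eq.symm ?_)
      linear_combination (r*m*Real.sin (m*u)*Real.sin (r*u)) * (Real.sin_sq_add_cos_sq v)
    · have h := (((hsm.const_mul (r * Real.cos v ^ 2)).mul hsr).neg).add
        ((hcr.const_mul (m * Real.sin v ^ 2)).mul hcm)
      show HasDerivAt _ (-((r^2 * Real.cos v ^ 2 + m^2 * Real.sin v ^ 2) * Real.sin (m*u) * Real.cos (r*u))
        - r*m*Real.cos (m*u)*Real.sin (r*u)) u
      refine h.congr_deriv (Eq.symm ?_)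
      linear_combination (r*m*Real.cos (m*u)*Real.sin (r*u)) * (Real.sin_sq_add_cos_sq v)
    · have h := ((hcm.const_mul (r * Real.cos v ^ 2)).mul hcr).sub
        ((hsr.const_mul (m * Real.sin v ^ 2)).mul hsm)
      show HasDerivAt _ (-((r^2 * Real.cos v ^ 2 + m^2 * Real.sin v ^ 2) * Real.cos (m*u) * Real.sin (r*u))
        - r*m*Real.sin (m*u)*Real.cos (r*u)) u
      refine h.congr_deriv (Eq.symm ?_)
      linear_combination (r*m*Real.sin (m*u)*Real.cos (r*u)) * (Real.sin_sq_add_cos_sq v)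
  have hW := euclid_hasDerivAt (f' := WithLp.toLp 2 _) (f := fun t =>
      (WithLp.toLp 2 ![-(m * Real.sin v * Real.cos v),
        r * Real.sin v * Real.cos v,
        -(r * Real.cos v ^ 2 * Real.sin (m * t) * Real.cos (r * t))
          - m * Real.sin v ^ 2 * Real.sin (r * t) * Real.cos (m * t),
        r * Real.cos v ^ 2 * Real.cos (m * t) * Real.sin (r * t)
          + m * Real.sin v ^ 2 * Real.cos (r * t) * Real.sin (m * t),
        -(r * Real.cos v ^ 2 * Real.sin (m * t) * Real.sin (r * t))
          + m * Real.sin v ^ 2 * Real.cos (r * t) * Real.cos (m * t),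
        r * Real.cos v ^ 2 * Real.cos (m * t) * Real.cos (r * t)
          - m * Real.sin v ^ 2 * Real.sin (r * t) * Real.sin (m * t)] : EuclideanSpace ℝ (Fin 6))) hpi
  exact HasDerivAt.const_smul ((Real.sqrt (r^2 * Real.cos v ^ 2 + m^2 * Real.sin v ^ 2))⁻¹) hW


private lemma keyV (r m u v : ℝ) (hE : 0 < r^2 * Real.cos v ^ 2 + m^2 * Real.sin v ^ 2) :
    HasDerivAt (fun t => bipolarLawson r m (u, t))
      ((Real.sqrt (r^2 * Real.cos v ^ 2 + m^2 * Real.sin v ^ 2))⁻¹ • vecWv r m u v +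
       (((r^2-m^2)*Real.sin v*Real.cos v) /
          (Real.sqrt (r^2 * Real.cos v ^ 2 + m^2 * Real.sin v ^ 2) *
            (r^2 * Real.cos v ^ 2 + m^2 * Real.sin v ^ 2))) • vecW r m u v) v := by
  have hcos2 := (Real.hasDerivAt_cos v).pow 2
  have hsin2 := (Real.hasDerivAt_sin v).pow 2
  have hpi : HasDerivAt
      (fun t => (![-(m * Real.sin t * Real.cos t),
        r * Real.sin t * Real.cos t,
        -(r * Real.cos t ^ 2 * Real.sin (m * u) * Real.cos (r * u))
          - m * Real.sin t ^ 2 * Real.sin (r * u) * Real.cos (m * u),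
        r * Real.cos t ^ 2 * Real.cos (m * u) * Real.sin (r * u)
          + m * Real.sin t ^ 2 * Real.cos (r * u) * Real.sin (m * u),
        -(r * Real.cos t ^ 2 * Real.sin (m * u) * Real.sin (r * u))
          + m * Real.sin t ^ 2 * Real.cos (r * u) * Real.cos (m * u),
        r * Real.cos t ^ 2 * Real.cos (m * u) * Real.cos (r * u)
          - m * Real.sin t ^ 2 * Real.sin (r * u) * Real.sin (m * u)] : Fin 6 → ℝ))
      (![-(m * (Real.cos v ^ 2 - Real.sin v ^ 2)),
        r * (Real.cos v ^ 2 - Real.sin v ^ 2),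
        2*Real.sin v*Real.cos v*(r*Real.sin (m*u)*Real.cos (r*u) - m*Real.sin (r*u)*Real.cos (m*u)),
        2*Real.sin v*Real.cos v*(m*Real.cos (r*u)*Real.sin (m*u) - r*Real.cos (m*u)*Real.sin (r*u)),
        2*Real.sin v*Real.cos v*(r*Real.sin (m*u)*Real.sin (r*u) + m*Real.cos (r*u)*Real.cos (m*u)),
        -(2*Real.sin v*Real.cos v*(r*Real.cos (m*u)*Real.cos (r*u) + m*Real.sin (r*u)*Real.sin (m*u)))] :
        Fin 6 → ℝ) v := by
    refine hasDerivAt_pi.2 fun i => ?_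
    fin_cases i <;>
      simp only [Matrix.cons_val_zero, Matrix.cons_val_one, Matrix.head_cons,
        Matrix.cons_val_succ, Matrix.tail_cons, Fin.isValue]
    · have h := (((Real.hasDerivAt_sin v).const_mul m).mul (Real.hasDerivAt_cos v)).neg
      show HasDerivAt _ (-(m * (Real.cos v ^ 2 - Real.sin v ^ 2))) v
      exact h.congr_deriv (by ring)
    · have h := ((Real.hasDerivAt_sin v).const_mul r).mul (Real.hasDerivAt_cos v)
      show HasDerivAt _ (r * (Real.cos v ^ 2 - Real.sin v ^ 2)) v
      exact h.congr_deriv (by ring)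
    · have h := ((((hcos2.const_mul r).mul_const (Real.sin (m*u))).mul_const (Real.cos (r*u))).neg).sub
        (((hsin2.const_mul m).mul_const (Real.sin (r*u))).mul_const (Real.cos (m*u)))
      show HasDerivAt _
        (2*Real.sin v*Real.cos v*(r*Real.sin (m*u)*Real.cos (r*u) - m*Real.sin (r*u)*Real.cos (m*u))) v
      exact h.congr_deriv (by ring)
    · have h := (((hcos2.const_mul r).mul_const (Real.cos (m*u))).mul_const (Real.sin (r*u))).add
        (((hsin2.const_mul m).mul_const (Real.cos (r*u))).mul_const (Real.sin (m*u)))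
      show HasDerivAt _
        (2*Real.sin v*Real.cos v*(m*Real.cos (r*u)*Real.sin (m*u) - r*Real.cos (m*u)*Real.sin (r*u))) v
      exact h.congr_deriv (by ring)
    · have h := ((((hcos2.const_mul r).mul_const (Real.sin (m*u))).mul_const (Real.sin (r*u))).neg).add
        (((hsin2.const_mul m).mul_const (Real.cos (r*u))).mul_const (Real.cos (m*u)))
      show HasDerivAt _
        (2*Real.sin v*Real.cos v*(r*Real.sin (m*u)*Real.sin (r*u) + m*Real.cos (r*u)*Real.cos (m*u))) v
      exact h.congr_deriv (by ring)
    · have h := (((hcos2.const_mul r).mul_const (Real.cos (m*u))).mul_const (Real.cos (r*u))).sub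
        (((hsin2.const_mul m).mul_const (Real.sin (r*u))).mul_const (Real.sin (m*u)))
      show HasDerivAt _
        (-(2*Real.sin v*Real.cos v*(r*Real.cos (m*u)*Real.cos (r*u) + m*Real.sin (r*u)*Real.sin (m*u)))) v
      exact h.congr_deriv (by ring)
  have hW := euclid_hasDerivAt (f' := WithLp.toLp 2 _) (f := fun t =>
      (WithLp.toLp 2 ![-(m * Real.sin t * Real.cos t),
        r * Real.sin t * Real.cos t,
        -(r * Real.cos t ^ 2 * Real.sin (m * u) * Real.cos (r * u))
          - m * Real.sin t ^ 2 * Real.sin (r * u) * Real.cos (m * u),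
        r * Real.cos t ^ 2 * Real.cos (m * u) * Real.sin (r * u)
          + m * Real.sin t ^ 2 * Real.cos (r * u) * Real.sin (m * u),
        -(r * Real.cos t ^ 2 * Real.sin (m * u) * Real.sin (r * u))
          + m * Real.sin t ^ 2 * Real.cos (r * u) * Real.cos (m * u),
        r * Real.cos t ^ 2 * Real.cos (m * u) * Real.cos (r * u)
          - m * Real.sin t ^ 2 * Real.sin (r * u) * Real.sin (m * u)] : EuclideanSpace ℝ (Fin 6))) hpi
  have hs0 : Real.sqrt (r^2 * Real.cos v ^ 2 + m^2 * Real.sin v ^ 2) ≠ 0 :=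
    (Real.sqrt_pos.2 hE).ne'
  have hEd : HasDerivAt (fun t => r^2 * Real.cos t ^ 2 + m^2 * Real.sin t ^ 2)
      (-(2*(r^2-m^2)*Real.sin v*Real.cos v)) v := by
    have h := (hcos2.const_mul (r^2)).add (hsin2.const_mul (m^2))
    exact h.congr_deriv (by ring)
  have ha : HasDerivAt (fun t => (Real.sqrt (r^2 * Real.cos t ^ 2 + m^2 * Real.sin t ^ 2))⁻¹)
      (((r^2-m^2)*Real.sin v*Real.cos v) /
        (Real.sqrt (r^2 * Real.cos v ^ 2 + m^2 * Real.sin v ^ 2) *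
          (r^2 * Real.cos v ^ 2 + m^2 * Real.sin v ^ 2))) v := by
    have h := (hEd.sqrt hE.ne').inv hs0
    refine h.congr_deriv (Eq.symm ?_)
    rw [Real.sq_sqrt hE.le]
    field_simp
  exact ha.smul hW

private lemma keyDiff (r m u v : ℝ) (hE : 0 < r^2 * Real.cos v ^ 2 + m^2 * Real.sin v ^ 2) :
    DifferentiableAt ℝ (bipolarLawson r m) (u, v) := by
  have h1 : DifferentiableAt ℝ
      (fun p : ℝ × ℝ => (Real.sqrt (r^2 * Real.cos p.2 ^ 2 + m^2 * Real.sin p.2 ^ 2))⁻¹) (u, v) := by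
    have hb : DifferentiableAt ℝ
        (fun p : ℝ × ℝ => r^2 * Real.cos p.2 ^ 2 + m^2 * Real.sin p.2 ^ 2) (u, v) := by
      fun_prop
    exact (hb.sqrt hE.ne').inv (Real.sqrt_pos.2 hE).ne'
  have hpp : DifferentiableAt ℝ (fun p : ℝ × ℝ =>
      (![-(m * Real.sin p.2 * Real.cos p.2),
       r * Real.sin p.2 * Real.cos p.2,
       -(r * Real.cos p.2 ^ 2 * Real.sin (m * p.1) * Real.cos (r * p.1))
         - m * Real.sin p.2 ^ 2 * Real.sin (r * p.1) * Real.cos (m * p.1),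
       r * Real.cos p.2 ^ 2 * Real.cos (m * p.1) * Real.sin (r * p.1)
         + m * Real.sin p.2 ^ 2 * Real.cos (r * p.1) * Real.sin (m * p.1),
       -(r * Real.cos p.2 ^ 2 * Real.sin (m * p.1) * Real.sin (r * p.1))
         + m * Real.sin p.2 ^ 2 * Real.cos (r * p.1) * Real.cos (m * p.1),
       r * Real.cos p.2 ^ 2 * Real.cos (m * p.1) * Real.cos (r * p.1)
         - m * Real.sin p.2 ^ 2 * Real.sin (r * p.1) * Real.sin (m * p.1)] : Fin 6 → ℝ)) (u, v) := by
    rw [differentiableAt_pi]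
    intro i
    have c0 : DifferentiableAt ℝ (fun p : ℝ × ℝ => -(m * Real.sin p.2 * Real.cos p.2)) (u, v) := by
      fun_prop
    have c1 : DifferentiableAt ℝ (fun p : ℝ × ℝ => r * Real.sin p.2 * Real.cos p.2) (u, v) := by
      fun_prop
    have c2 : DifferentiableAt ℝ (fun p : ℝ × ℝ =>
        -(r * Real.cos p.2 ^ 2 * Real.sin (m * p.1) * Real.cos (r * p.1))
          - m * Real.sin p.2 ^ 2 * Real.sin (r * p.1) * Real.cos (m * p.1)) (u, v) := by fun_prop
    have c3 : DifferentiableAt ℝ (fun p : ℝ × ℝ =>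
        r * Real.cos p.2 ^ 2 * Real.cos (m * p.1) * Real.sin (r * p.1)
          + m * Real.sin p.2 ^ 2 * Real.cos (r * p.1) * Real.sin (m * p.1)) (u, v) := by fun_prop
    have c4 : DifferentiableAt ℝ (fun p : ℝ × ℝ =>
        -(r * Real.cos p.2 ^ 2 * Real.sin (m * p.1) * Real.sin (r * p.1))
          + m * Real.sin p.2 ^ 2 * Real.cos (r * p.1) * Real.cos (m * p.1)) (u, v) := by fun_prop
    have c5 : DifferentiableAt ℝ (fun p : ℝ × ℝ =>
        r * Real.cos p.2 ^ 2 * Real.cos (m * p.1) * Real.cos (r * p.1)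
          - m * Real.sin p.2 ^ 2 * Real.sin (r * p.1) * Real.sin (m * p.1)) (u, v) := by fun_prop
    fin_cases i
    exacts [c0, c1, c2, c3, c4, c5]
  exact h1.smul (euclid_diffAt (f := fun p : ℝ × ℝ =>
      (WithLp.toLp 2 ![-(m * Real.sin p.2 * Real.cos p.2),
       r * Real.sin p.2 * Real.cos p.2,
       -(r * Real.cos p.2 ^ 2 * Real.sin (m * p.1) * Real.cos (r * p.1))
         - m * Real.sin p.2 ^ 2 * Real.sin (r * p.1) * Real.cos (m * p.1),
       r * Real.cos p.2 ^ 2 * Real.cos (m * p.1) * Real.sin (r * p.1)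
         + m * Real.sin p.2 ^ 2 * Real.cos (r * p.1) * Real.sin (m * p.1),
       -(r * Real.cos p.2 ^ 2 * Real.sin (m * p.1) * Real.sin (r * p.1))
         + m * Real.sin p.2 ^ 2 * Real.cos (r * p.1) * Real.cos (m * p.1),
       r * Real.cos p.2 ^ 2 * Real.cos (m * p.1) * Real.cos (r * p.1)
         - m * Real.sin p.2 ^ 2 * Real.sin (r * p.1) * Real.sin (m * p.1)] : EuclideanSpace ℝ (Fin 6))) hpp)

set_option maxHeartbeats 1000000 in
theorem bipolarLawson_first_fundamental_form (r m : ℝ) (hm : 0 < m) (hrm : m < r) (u v : ℝ) :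
    0 < r^2 - (r^2 - m^2) * Real.sin v ^ 2 ∧
    ⟪fderiv ℝ (bipolarLawson r m) (u, v) (1, 0), fderiv ℝ (bipolarLawson r m) (u, v) (1, 0)⟫
        = ((r^2 - (r^2 - m^2) * Real.sin v ^ 2)^2 + r^2 * m^2)
            / (r^2 - (r^2 - m^2) * Real.sin v ^ 2) ∧
    ⟪fderiv ℝ (bipolarLawson r m) (u, v) (1, 0), fderiv ℝ (bipolarLawson r m) (u, v) (0, 1)⟫
        = 0 ∧
    ⟪fderiv ℝ (bipolarLawson r m) (u, v) (0, 1), fderiv ℝ (bipolarLawson r m) (u, v) (0, 1)⟫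
        = ((r^2 - (r^2 - m^2) * Real.sin v ^ 2)^2 + r^2 * m^2)
            / (r^2 - (r^2 - m^2) * Real.sin v ^ 2)^2 := by
  have pv := Real.sin_sq_add_cos_sq v
  have hD : 0 < r^2 - (r^2 - m^2) * Real.sin v ^ 2 := by
    nlinarith [Real.sin_sq_le_one v, mul_pos hm hm,
      mul_pos (sub_pos.2 hrm) (show (0:ℝ) < r + m by linarith), sq_nonneg (Real.sin v)]
  have hEeq : r^2 * Real.cos v ^ 2 + m^2 * Real.sin v ^ 2
      = r^2 - (r^2 - m^2) * Real.sin v ^ 2 := by linear_combination r^2 * pv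
  have hE : 0 < r^2 * Real.cos v ^ 2 + m^2 * Real.sin v ^ 2 := by rw [hEeq]; exact hD
  have hdiff : DifferentiableAt ℝ (bipolarLawson r m) (u, v) := keyDiff r m u v hE
  have hgU : HasDerivAt (fun t => bipolarLawson r m (t, v))
      (fderiv ℝ (bipolarLawson r m) (u, v) (1, 0)) u :=
    hdiff.hasFDerivAt.comp_hasDerivAt (l := bipolarLawson r m) u ((hasDerivAt_id u).prodMk (hasDerivAt_const u v))
  have hgV : HasDerivAt (fun t => bipolarLawson r m (u, t))
      (fderiv ℝ (bipolarLawson r m) (u, v) (0, 1)) v :=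
    hdiff.hasFDerivAt.comp_hasDerivAt (l := bipolarLawson r m) v ((hasDerivAt_const v u).prodMk (hasDerivAt_id v))
  have hPeq := hgU.unique (keyU r m u v)
  have hQeq := hgV.unique (keyV r m u v hE)
  have hss : Real.sqrt (r^2 - (r^2 - m^2) * Real.sin v ^ 2) *
      Real.sqrt (r^2 - (r^2 - m^2) * Real.sin v ^ 2) = r^2 - (r^2 - m^2) * Real.sin v ^ 2 :=
    Real.mul_self_sqrt hD.le
  have hs0 : Real.sqrt (r^2 - (r^2 - m^2) * Real.sin v ^ 2) ≠ 0 := by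
    rw [← hEeq]; exact (Real.sqrt_pos.2 hE).ne'
  refine ⟨hD, ?_, ?_, ?_⟩
  · rw [hPeq, real_inner_smul_left, real_inner_smul_right, innAA r m u v, hEeq, ← mul_assoc,
      ← mul_inv, hss, inv_mul_eq_div]
  · rw [hPeq, hQeq, inner_add_right, real_inner_smul_left, real_inner_smul_left,
      real_inner_smul_right, real_inner_smul_right, innAWv r m u v, innAW r m u v]
    ring
  · rw [hQeq, hEeq, inner_smul_add_smul, innWvWv r m u v, innWvW r m u v, innWW r m u v]
    have key : (m^2 + r^2) * (r^2 - (r^2 - m^2) * Real.sin v ^ 2)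
        - ((r^2 - m^2) * Real.sin v * Real.cos v)^2
        = (r^2 - (r^2 - m^2) * Real.sin v ^ 2)^2 + r^2 * m^2 := by
      linear_combination ((-1)*m^4*(Real.sin v)^2 + (2)*r^2*m^2*(Real.sin v)^2
        + (-1)*r^4*(Real.sin v)^2) * pv
    exact scalar_qq _ _ _ _ _ hD.ne' hss hs0 key
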